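/- Let d be a positive integer, λ > 0, and let φ₁, …, φ_T ∈ ℝ^d with ‖φ_t‖ ≤ L for all t. Define Σ_t = λI + Σ_{s=1}^t φ_s φ_sᵀ. Then Σ_{t=1}^T min{1, ‖φ_t‖²_{Σ_{t-1}^{-1}}} ≤ 2d log(1 + T L²/(dλ)), where ‖x‖²_A := xᵀ A x. -/

import Mathlib

open Matrix Finset

lemma min_le_two_log (x : ℝ) (hx : 0 ≤ x) : min 1 x ≤ 2 * Real.log (1 + x) := by
  rcases le_total x 1 with h | h
  · rw [min_eq_right h]
    have hpos : (0:ℝ) < 1 + x := by linarith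
    have h1 : x / (1 + x) ≤ Real.log (1 + x) := by
      have hl := Real.log_le_sub_one_of_pos (x := (1+x)⁻¹) (by positivity)
      rw [Real.log_inv] at hl
      have he : x / (1+x) = 1 - (1+x)⁻¹ := by field_simp; ring
      rw [he]; linarith
    have h2 : x / 2 ≤ x / (1 + x) :=
      div_le_div_of_nonneg_left hx hpos (by linarith)
    linarith
  · rw [min_eq_left h]
    have h2 : Real.log 2 ≤ Real.log (1 + x) := Real.log_le_log (by norm_num) (by linarith)
    nlinarith [Real.log_two_gt_d9]

lemma amgm_prod_le (d : ℕ) (hd : 0 < d) (z : Fin d → ℝ) (hz : ∀ i, 0 ≤ z i) :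
    ∏ i, z i ≤ ((∑ i, z i) / d) ^ d := by
  have hd' : (0:ℝ) < d := Nat.cast_pos.mpr hd
  have key := Real.geom_mean_le_arith_mean_weighted Finset.univ (fun _ => (d:ℝ)⁻¹) z
    (fun _ _ => by positivity)
    (by simp [Finset.card_univ]; field_simp)
    (fun i _ => hz i)
  have hprod : ∏ i, z i ^ ((d:ℝ)⁻¹) = (∏ i, z i) ^ ((d:ℝ)⁻¹) := by
    rw [← Real.finset_prod_rpow _ _ (fun i _ => hz i)]
  have hsum : ∑ i : Fin d, (d:ℝ)⁻¹ * z i = (∑ i, z i) / d := by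
    rw [← Finset.mul_sum]; ring
  rw [hprod, hsum] at key
  have h0 : (0:ℝ) ≤ ∏ i, z i := Finset.prod_nonneg (fun i _ => hz i)
  calc ∏ i, z i = ((∏ i, z i) ^ ((d:ℝ)⁻¹)) ^ (d:ℝ) := by
        rw [← Real.rpow_mul h0]
        field_simp
        simp
    _ ≤ ((∑ i, z i) / d) ^ (d:ℝ) := by
        apply Real.rpow_le_rpow (Real.rpow_nonneg h0 _) key hd'.le
    _ = ((∑ i, z i) / d) ^ d := by
        rw [Real.rpow_natCast]

lemma trace_eq_sum_eig {d : ℕ} {A : Matrix (Fin d) (Fin d) ℝ} (hA : A.IsHermitian) :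
    A.trace = ∑ i, hA.eigenvalues i := by
  nth_rewrite 1 [hA.spectral_theorem]
  rw [Unitary.conjStarAlgAut_apply, Matrix.trace_mul_cycle]
  have : (star (Matrix.IsHermitian.eigenvectorUnitary hA : Matrix (Fin d) (Fin d) ℝ)) *
      (Matrix.IsHermitian.eigenvectorUnitary hA : Matrix (Fin d) (Fin d) ℝ) = 1 :=
    Unitary.coe_star_mul_self _
  rw [this, Matrix.one_mul, Matrix.trace_diagonal]
  simp

lemma psd_vecMulVec {d : ℕ} (u : Fin d → ℝ) : (vecMulVec u u).PosSemidef := by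
  refine Matrix.PosSemidef.of_dotProduct_mulVec_nonneg ?_ ?_
  · ext i j; simp [vecMulVec_apply, conjTranspose_apply, mul_comm]
  · intro x
    have : star x ⬝ᵥ (vecMulVec u u) *ᵥ x = (u ⬝ᵥ x) * (u ⬝ᵥ x) := by
      simp [dotProduct, mulVec, vecMulVec_apply, Finset.mul_sum, Finset.sum_mul]
      rw [Finset.sum_comm]
      congr 1; ext i; congr 1; ext j; ring
    rw [this]
    exact mul_self_nonneg _

lemma det_succ_aux {d : ℕ} (A : Matrix (Fin d) (Fin d) ℝ) (hA : A.PosDef) (u : Fin d → ℝ) :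
    (A + vecMulVec u u).det = A.det * (1 + u ⬝ᵥ A⁻¹ *ᵥ u) := by
  rw [vecMulVec_eq Unit, Matrix.det_add_replicateCol_mul_replicateRow hA.det_pos.ne'.isUnit]
  congr 1
  rw [Matrix.mul_assoc, ← Matrix.replicateCol_mulVec, Matrix.det_unique]
  simp [Matrix.replicateRow_mul_replicateCol_apply]

lemma trace_vecMulVec' {d : ℕ} (u : Fin d → ℝ) :
    (vecMulVec u u).trace = u ⬝ᵥ u := by
  simp [Matrix.trace, Matrix.diag, vecMulVec_apply, dotProduct]

set_option maxHeartbeats 1000000 in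
theorem elliptical_potential (d T : ℕ) (hd : 0 < d) (lam L : ℝ) (hlam : 0 < lam)
    (φ : ℕ → (Fin d → ℝ)) (hφ : ∀ t, Real.sqrt (φ t ⬝ᵥ φ t) ≤ L)
    (Sig : ℕ → Matrix (Fin d) (Fin d) ℝ)
    (hSig : ∀ t, Sig t = lam • (1 : Matrix (Fin d) (Fin d) ℝ) +
      ∑ s ∈ Finset.range t, vecMulVec (φ s) (φ s)) :
    ∑ t ∈ Finset.range T, min 1 (φ t ⬝ᵥ (Sig t)⁻¹ *ᵥ φ t) ≤
      2 * d * Real.log (1 + T * L ^ 2 / (d * lam)) := by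
  have hd' : (0:ℝ) < d := Nat.cast_pos.mpr hd
  set q : ℕ → ℝ := fun t => φ t ⬝ᵥ (Sig t)⁻¹ *ᵥ φ t with hq
  -- basic norms
  have hdz : ∀ t, 0 ≤ φ t ⬝ᵥ φ t := by
    intro t
    exact Finset.sum_nonneg fun i _ => mul_self_nonneg _
  have hL0 : 0 ≤ L := le_trans (Real.sqrt_nonneg _) (hφ 0)
  have hnormsq : ∀ t, φ t ⬝ᵥ φ t ≤ L ^ 2 := by
    intro t
    have := Real.sqrt_le_sqrt (le_of_eq (rfl : φ t ⬝ᵥ φ t = φ t ⬝ᵥ φ t))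
    nlinarith [hφ t, Real.sq_sqrt (hdz t), Real.sqrt_nonneg (φ t ⬝ᵥ φ t)]
  -- positive definiteness
  have hPD : ∀ t, (Sig t).PosDef := by
    intro t
    rw [hSig t]
    apply Matrix.PosDef.add_posSemidef
    · rw [Matrix.smul_one_eq_diagonal]
      exact Matrix.PosDef.diagonal (fun _ => hlam)
    · apply Finset.sum_induction _ _ (fun a b ha hb => ha.add hb) Matrix.PosSemidef.zero
      exact fun s _ => psd_vecMulVec (φ s)
  have hq0 : ∀ t, 0 ≤ q t := by
    intro t
    have := ((hPD t).posSemidef.inv).dotProduct_mulVec_nonneg (φ t)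
    simpa using this
  -- determinant recurrence and product formula
  have hdet_rec : ∀ t, (Sig (t+1)).det = (Sig t).det * (1 + q t) := by
    intro t
    have hs : Sig (t+1) = Sig t + vecMulVec (φ t) (φ t) := by
      rw [hSig (t+1), hSig t, Finset.sum_range_succ, add_assoc]
    rw [hs, det_succ_aux _ (hPD t)]
  have hdet_prod : ∀ n, (Sig n).det = (Sig 0).det * ∏ t ∈ Finset.range n, (1 + q t) := by
    intro n
    induction n with
    | zero => simp
    | succ n ih => rw [hdet_rec n, ih, Finset.prod_range_succ, mul_assoc]
  have hdet0 : (Sig 0).det = lam ^ d := by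
    rw [hSig 0]
    simp [Matrix.det_smul]
  -- log of determinant
  have h1q : ∀ t, (0:ℝ) < 1 + q t := fun t => by linarith [hq0 t]
  have hlog : Real.log (Sig T).det =
      d * Real.log lam + ∑ t ∈ Finset.range T, Real.log (1 + q t) := by
    rw [hdet_prod T, hdet0, Real.log_mul (by positivity)
      (Finset.prod_ne_zero_iff.mpr fun t _ => (h1q t).ne'), Real.log_pow,
      Real.log_prod fun t _ => (h1q t).ne']
  -- sum bound via min ≤ 2 log
  have hsum1 : ∑ t ∈ Finset.range T, min 1 (q t) ≤
      2 * (Real.log (Sig T).det - d * Real.log lam) := by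
    rw [hlog]
    have : ∑ t ∈ Finset.range T, min 1 (q t) ≤
        ∑ t ∈ Finset.range T, 2 * Real.log (1 + q t) :=
      Finset.sum_le_sum fun t _ => min_le_two_log (q t) (hq0 t)
    rw [← Finset.mul_sum] at this
    linarith
  -- trace bound
  have htraceT : (Sig T).trace ≤ d * lam + T * L ^ 2 := by
    rw [hSig T]
    rw [Matrix.trace_add, Matrix.trace_smul, Matrix.trace_one, Matrix.trace_sum]
    have h1 : ∑ s ∈ Finset.range T, (vecMulVec (φ s) (φ s)).trace ≤
        ∑ s ∈ Finset.range T, L ^ 2 := by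
      apply Finset.sum_le_sum
      intro s _
      rw [trace_vecMulVec']
      exact hnormsq s
    simp only [Finset.sum_const, Finset.card_range, nsmul_eq_mul] at h1
    simp only [smul_eq_mul, Fintype.card_fin]
    linarith
  have htrace_pos : (0:ℝ) < (Sig T).trace := by
    rw [hSig T, Matrix.trace_add, Matrix.trace_smul, Matrix.trace_one, Matrix.trace_sum]
    have h2 : 0 ≤ ∑ s ∈ Finset.range T, (vecMulVec (φ s) (φ s)).trace := by
      apply Finset.sum_nonneg
      intro s _
      rw [trace_vecMulVec']
      exact hdz s
    simp only [smul_eq_mul, Fintype.card_fin]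
    nlinarith
  -- det ≤ (trace/d)^d
  have hdet_le : (Sig T).det ≤ ((Sig T).trace / d) ^ d := by
    have hH := (hPD T).isHermitian
    have hdet : (Sig T).det = ∏ i, hH.eigenvalues i := by
      have := hH.det_eq_prod_eigenvalues
      simpa using this
    rw [hdet, trace_eq_sum_eig hH]
    exact amgm_prod_le d hd _ fun i => ((hPD T).eigenvalues_pos i).le
  -- final chain
  have hc : (0:ℝ) < 1 + T * L ^ 2 / (d * lam) := by positivity
  have hfinal : Real.log (Sig T).det - d * Real.log lam ≤
      d * Real.log (1 + T * L ^ 2 / (d * lam)) := by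
    have hld : Real.log (Sig T).det ≤ d * Real.log ((Sig T).trace / d) := by
      calc Real.log (Sig T).det ≤ Real.log (((Sig T).trace / d) ^ d) :=
            Real.log_le_log (hPD T).det_pos hdet_le
        _ = d * Real.log ((Sig T).trace / d) := by rw [Real.log_pow]
    have hm : (Sig T).trace / d ≤ lam * (1 + T * L ^ 2 / (d * lam)) := by
      rw [div_le_iff₀ hd']
      have : lam * (1 + T * L ^ 2 / (d * lam)) * d = d * lam + T * L ^ 2 := by
        field_simp
      rw [this]
      exact htraceT
    have hlm : Real.log ((Sig T).trace / d) ≤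
        Real.log lam + Real.log (1 + T * L ^ 2 / (d * lam)) := by
      rw [← Real.log_mul hlam.ne' hc.ne']
      exact Real.log_le_log (by positivity) hm
    nlinarith [hld, hlm]
  calc ∑ t ∈ Finset.range T, min 1 (q t) ≤
      2 * (Real.log (Sig T).det - d * Real.log lam) := hsum1
    _ ≤ 2 * (d * Real.log (1 + T * L ^ 2 / (d * lam))) := by linarith
    _ = 2 * d * Real.log (1 + T * L ^ 2 / (d * lam)) := by ring
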